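/- Let λ ∈ ℝ and let D : [0,∞) → ℝ be continuously differentiable. Then the following are equivalent: (i) for all u, t ≥ 0, −D'(u+t) ≤ e^{−2λt}·(−D'(u)); (ii) for all u, s, t ≥ 0, D(u+t) − D(u+s+t) ≤ e^{−2λt}·(D(u) − D(u+s)). -/

import Mathlib

private lemma ftc_Ici (D D' : ℝ → ℝ)
    (hderiv : ∀ t ∈ Set.Ici (0 : ℝ), HasDerivWithinAt D (D' t) (Set.Ici 0) t)
    (hcont : ContinuousOn D' (Set.Ici 0)) {a b : ℝ} (ha : 0 ≤ a) (hab : a ≤ b) :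
    ∫ x in a..b, D' x = D b - D a := by
  have hsub : Set.Icc a b ⊆ Set.Ici (0 : ℝ) := fun x hx => le_trans ha hx.1
  refine intervalIntegral.integral_eq_sub_of_hasDeriv_right_of_le hab ?_ ?_ ?_
  · exact fun x hx => ((hderiv x (hsub hx)).continuousWithinAt).mono hsub
  · intro x hx
    exact (hderiv x (le_trans ha hx.1.le)).mono
      (fun y hy => le_trans (le_trans ha hx.1.le) (le_of_lt hy))
  · exact (hcont.mono hsub).intervalIntegrable_of_Icc hab

/-- The real-analytic core of Proposition 3.1: for a continuously differentiable
`D : [0,∞) → ℝ`, λ-Fisher monotonicity `-D'(u+t) ≤ e^{-2λt}·(-D'(u))` is equivalent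
to the shifted entropy-difference decay
`D(u+t) - D(u+s+t) ≤ e^{-2λt}·(D(u) - D(u+s))`. -/
theorem fisher_monotonicity_iff_entropy_difference_decay
    (lam : ℝ) (D D' : ℝ → ℝ)
    (hderiv : ∀ t ∈ Set.Ici (0 : ℝ), HasDerivWithinAt D (D' t) (Set.Ici 0) t)
    (hcont : ContinuousOn D' (Set.Ici 0)) :
    (∀ u ≥ (0 : ℝ), ∀ t ≥ (0 : ℝ),
        -D' (u + t) ≤ Real.exp (-2 * lam * t) * (-D' u)) ↔
    (∀ u ≥ (0 : ℝ), ∀ s ≥ (0 : ℝ), ∀ t ≥ (0 : ℝ),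
        D (u + t) - D (u + s + t) ≤ Real.exp (-2 * lam * t) * (D u - D (u + s))) := by
  constructor
  · intro h u hu s hs t ht
    have h1 : ∫ x in u..u + s, D' x = D (u + s) - D u :=
      ftc_Ici D D' hderiv hcont hu (by linarith)
    have h2 : ∫ x in (u + t)..(u + s + t), D' x = D (u + s + t) - D (u + t) :=
      ftc_Ici D D' hderiv hcont (by linarith) (by linarith)
    have hcomp : (∫ x in u..u + s, D' (x + t)) = ∫ x in (u + t)..(u + s + t), D' x := by
      simpa using intervalIntegral.integral_comp_add_right (a := u) (b := u + s)
        (fun x => D' x) t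
    have hmono : (∫ x in u..u + s, -D' (x + t)) ≤
        ∫ x in u..u + s, Real.exp (-2 * lam * t) * (-D' x) := by
      refine intervalIntegral.integral_mono_on (by linarith) ?_ ?_ ?_
      · have : ContinuousOn (fun x => -D' (x + t)) (Set.Icc u (u + s)) := by
          refine ((hcont.comp (continuousOn_id.add continuousOn_const) ?_).neg)
          intro x hx; exact by simpa using add_nonneg (le_trans hu hx.1) ht
        exact this.intervalIntegrable_of_Icc (by linarith)
      · have : ContinuousOn (fun x => Real.exp (-2 * lam * t) * (-D' x))
            (Set.Icc u (u + s)) :=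
          continuousOn_const.mul
            (hcont.mono (fun x (hx : x ∈ Set.Icc u (u + s)) => le_trans hu hx.1)).neg
        exact this.intervalIntegrable_of_Icc (by linarith)
      · intro x hx
        exact h x (le_trans hu hx.1) t ht
    have hneg : (∫ x in u..u + s, -D' (x + t)) = -(∫ x in u..u + s, D' (x + t)) := by
      simp [intervalIntegral.integral_neg]
    have hneg2 : (∫ x in u..u + s, Real.exp (-2 * lam * t) * (-D' x))
        = Real.exp (-2 * lam * t) * (-(∫ x in u..u + s, D' x)) := by
      rw [intervalIntegral.integral_const_mul, intervalIntegral.integral_neg]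
    rw [hneg, hneg2, hcomp, h1, h2] at hmono
    linarith [hmono]
  · intro h u hu t ht
    set c := Real.exp (-2 * lam * t) with hc
    -- g s = c*(D u - D (u+s)) - (D (u+t) - D (u+s+t)), nonneg on Ici 0, g 0 = 0
    set g : ℝ → ℝ := fun s => c * (D u - D (u + s)) - (D (u + t) - D (u + s + t)) with hg
    have hg0 : g 0 = 0 := by simp [hg]
    have hgnn : ∀ s ∈ Set.Ici (0 : ℝ), 0 ≤ g s := by
      intro s hs
      have := h u hu s hs t ht
      simp only [hg]
      linarith
    have hinner : HasDerivWithinAt (fun s : ℝ => u + s) 1 (Set.Ici 0) 0 :=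
      (hasDerivWithinAt_id (0 : ℝ) (Set.Ici 0)).const_add u
    have hmap1 : Set.MapsTo (fun s : ℝ => u + s) (Set.Ici 0) (Set.Ici 0) :=
      fun x hx => by simpa using add_nonneg hu hx
    have hd1 : HasDerivWithinAt (fun s => D (u + s)) (D' u) (Set.Ici 0) 0 := by
      have := (hderiv (u + 0) (by simpa using hu)).comp 0 hinner hmap1
      simpa [Function.comp_def] using this
    have hinner2 : HasDerivWithinAt (fun s : ℝ => u + s + t) 1 (Set.Ici 0) 0 :=
      hinner.add_const t
    have hmap2 : Set.MapsTo (fun s : ℝ => u + s + t) (Set.Ici 0) (Set.Ici 0) :=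
      fun x hx => by
        simp only [Set.mem_Ici] at *
        linarith
    have hd2 : HasDerivWithinAt (fun s => D (u + s + t)) (D' (u + t)) (Set.Ici 0) 0 := by
      have := (hderiv (u + 0 + t) (by simp only [add_zero, Set.mem_Ici]; linarith)).comp
        0 hinner2 hmap2
      simpa [Function.comp_def] using this
    have hdg : HasDerivWithinAt g (c * (-D' u) - (-D' (u + t))) (Set.Ici 0) 0 := by
      have : HasDerivWithinAt (fun s => c * (D u - D (u + s)))
          (c * (0 - D' u)) (Set.Ici 0) 0 :=
        ((hasDerivWithinAt_const (0:ℝ) (Set.Ici 0) (D u)).sub hd1).const_mul c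
      have h2 : HasDerivWithinAt (fun s => D (u + t) - D (u + s + t))
          (0 - D' (u + t)) (Set.Ici 0) 0 :=
        (hasDerivWithinAt_const (0:ℝ) (Set.Ici 0) (D (u + t))).sub hd2
      simpa [hg, zero_sub, Pi.sub_def] using this.sub h2
    -- slope argument: derivative at left endpoint of a nonneg function vanishing at 0
    have hslope := hasDerivWithinAt_iff_tendsto_slope.mp hdg
    have hset : Set.Ici (0 : ℝ) \ {0} = Set.Ioi (0 : ℝ) := by
      ext x; simp [Set.mem_diff, lt_iff_le_and_ne, eq_comm, and_comm]
    rw [hset] at hslope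
    have hnn : 0 ≤ c * (-D' u) - (-D' (u + t)) := by
      refine le_of_tendsto_of_tendsto tendsto_const_nhds hslope ?_
      filter_upwards [self_mem_nhdsWithin] with x hx
      have hx0 : 0 < x := hx
      have : slope g 0 x = g x / x := by simp [slope_def_field, hg0, div_eq_inv_mul]
      rw [this]
      exact div_nonneg (hgnn x hx0.le) hx0.le
    linarith
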